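/- Let f ∈ F₂[x] be nonconstant, R = F₂[x]/(f), and let T = a₁,…,a_t be elements of R such that, in the multiplicative monoid, the partial products satisfy 1 >_H a₁ >_H a₁a₂ >_H ⋯ >_H a₁⋯a_t (each strict Green inequality). Then the chain of stabilizers K₀ = {1} ⊆ K₁ ⊆ ⋯ ⊆ K_t, where K_i = St(a₁⋯a_i), is increasing, and the number of indices i ∈ {0,…,t−1} with K_i = K_{i+1} is at most δ_f, where δ_f = 0, 1, or 2 according as gcd(x(x+1), f) is 1, in {x, x+1}, or x(x+1). -/

import Mathlib

open Polynomial

namespace Stmt13Aux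

abbrev P2 := Polynomial (ZMod 2)

lemma zmod2_unit (r : ZMod 2) (h : IsUnit r) : r = 1 := by
  have h0 : r ≠ 0 := h.ne_zero
  revert h0; revert r; decide

lemma unit_eq_one {u : P2} (hu : IsUnit u) : u = 1 := by
  obtain ⟨r, hr, rfl⟩ := Polynomial.isUnit_iff.mp hu
  rw [zmod2_unit r hr, map_one]

lemma assoc_eq {a b : P2} (h : Associated a b) : a = b := by
  obtain ⟨u, hu⟩ := h
  have : (u : P2) = 1 := unit_eq_one u.isUnit
  rw [← hu, this, mul_one]

lemma eq_of_prime_dvd_irreducible {q s : P2} (hq : Prime q) (hs : Irreducible s)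
    (h : q ∣ s) : q = s := by
  exact assoc_eq (hq.irreducible.associated_of_dvd hs h)

lemma two_eq_zero : (1 : P2) + 1 = 0 := by
  rw [← Polynomial.C_1, ← Polynomial.C_add]
  have h : (1 + 1 : ZMod 2) = 0 := by decide
  rw [h, map_zero]

lemma X_add_one_irred : Irreducible ((X : P2) + 1) := by
  have h : (X : P2) + 1 = X - C 1 := by
    rw [Polynomial.C_1, sub_eq_add_neg, neg_eq_of_add_eq_zero_left two_eq_zero]
  rw [h]; exact Polynomial.irreducible_X_sub_C 1

lemma X_ne_X_add_one : (X : P2) ≠ X + 1 := by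
  intro h
  have := congrArg (fun p => Polynomial.coeff p 0) h
  simp at this

lemma coprime_of_forall_prime {f v : P2} (hf : f ≠ 0)
    (h : ∀ p : P2, Prime p → p ∣ f → ¬ p ∣ v) : IsCoprime v f := by
  classical
  by_contra hc
  have hg : ¬ IsUnit (EuclideanDomain.gcd v f) := fun h' =>
    hc ((EuclideanDomain.gcd_isUnit_iff).mp h')
  have hg0 : EuclideanDomain.gcd v f ≠ 0 := fun h0 =>
    hf ((EuclideanDomain.gcd_eq_zero_iff).mp h0).2
  obtain ⟨p, hp, hpd⟩ := WfDvdMonoid.exists_irreducible_factor hg hg0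
  exact h p hp.prime (hpd.trans (EuclideanDomain.gcd_dvd_right v f))
    (hpd.trans (EuclideanDomain.gcd_dvd_left v f))

/-- The core combinatorial lemma about stalls. -/
lemma core {f d k : P2} (hf0 : f ≠ 0) (hdk : d * k ∣ f) (hk : ¬ IsUnit k)
    (hstall : ∀ w : P2, IsCoprime (1 + d * w) f → k ∣ w) :
    ∃ q : P2, (q = X ∨ q = X + 1) ∧ q ∣ k ∧ ¬ q ∣ d := by
  classical
  have hk0 : k ≠ 0 := by
    rintro rfl
    rw [mul_zero] at hdk
    exact hf0 (zero_dvd_iff.mp hdk)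
  obtain ⟨q, hqirr, hqk⟩ := WfDvdMonoid.exists_irreducible_factor hk hk0
  have hq : Prime q := hqirr.prime
  -- membership in factors: any prime dividing f equals one of the factors
  have factor_mem : ∀ p : P2, Prime p → p ∣ f → p ∈ UniqueFactorizationMonoid.factors f := by
    intro p hp hpf
    obtain ⟨s, hs, hassoc⟩ :=
      UniqueFactorizationMonoid.exists_mem_factors_of_dvd hf0 hp.irreducible hpf
    rwa [assoc_eq hassoc]
  -- Step A : ¬ q ∣ d
  have hqd : ¬ q ∣ d := by
    intro hqd
    set r : P2 := ((UniqueFactorizationMonoid.factors f).filter (fun p => ¬ p ∣ d)).prod with hr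
    have hcop : IsCoprime (1 + d * r) f := by
      apply coprime_of_forall_prime hf0
      intro p hp hpf hpv
      by_cases hpd : p ∣ d
      · exact hp.not_unit (isUnit_of_dvd_one (by
          have : p ∣ d * r := hpd.mul_right r
          have h1 : p ∣ 1 := (dvd_add_right this).mp (by rwa [add_comm] at hpv)
          exact h1))
      · have hmem : p ∈ (UniqueFactorizationMonoid.factors f).filter (fun p => ¬ p ∣ d) :=
          Multiset.mem_filter.mpr ⟨factor_mem p hp hpf, hpd⟩
        have hpr : p ∣ r := Multiset.dvd_prod hmem
        have : p ∣ d * r := hpr.mul_left d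
        have h1 : p ∣ 1 := (dvd_add_right this).mp (by rwa [add_comm] at hpv)
        exact hp.not_unit (isUnit_of_dvd_one h1)
    have hkr : k ∣ r := hstall r hcop
    have hqr : q ∣ r := hqk.trans hkr
    obtain ⟨s, hsmem, hqs⟩ := hq.exists_mem_multiset_dvd hqr
    obtain ⟨hsf, hsd⟩ := Multiset.mem_filter.mp hsmem
    have : q = s := eq_of_prime_dvd_irreducible hq
      (UniqueFactorizationMonoid.irreducible_of_factor s hsf) hqs
    exact hsd (this ▸ hqd)
  -- Step B : q = X or q = X + 1
  refine ⟨q, ?_, hqk, hqd⟩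
  by_contra hqX
  push_neg at hqX
  obtain ⟨hq1, hq2⟩ := hqX
  set r : P2 := ((UniqueFactorizationMonoid.factors f).filter
      (fun p => ¬ p ∣ d ∧ p ≠ q)).prod with hr
  have hqr : ¬ q ∣ r := by
    intro hqr
    obtain ⟨s, hsmem, hqs⟩ := hq.exists_mem_multiset_dvd hqr
    obtain ⟨hsf, -, hsq⟩ := Multiset.mem_filter.mp hsmem
    exact hsq (eq_of_prime_dvd_irreducible hq
      (UniqueFactorizationMonoid.irreducible_of_factor s hsf) hqs).symm
  have key : ∀ z : P2, ¬ q ∣ z → q ∣ 1 + d * (r * z) := by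
    intro z hqz
    by_contra hqv
    have hcop : IsCoprime (1 + d * (r * z)) f := by
      apply coprime_of_forall_prime hf0
      intro p hp hpf hpv
      by_cases hpd : p ∣ d
      · have : p ∣ d * (r * z) := hpd.mul_right _
        exact hp.not_unit (isUnit_of_dvd_one ((dvd_add_right this).mp (by rwa [add_comm] at hpv)))
      · by_cases hpq : p = q
        · exact hqv (hpq ▸ hpv)
        · have hmem : p ∈ (UniqueFactorizationMonoid.factors f).filter
              (fun p => ¬ p ∣ d ∧ p ≠ q) :=
            Multiset.mem_filter.mpr ⟨factor_mem p hp hpf, hpd, hpq⟩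
          have hpr : p ∣ r := Multiset.dvd_prod hmem
          have : p ∣ d * (r * z) := (hpr.mul_right z).mul_left d
          exact hp.not_unit (isUnit_of_dvd_one ((dvd_add_right this).mp (by rwa [add_comm] at hpv)))
    have hkw : k ∣ r * z := hstall _ hcop
    have : q ∣ r * z := hqk.trans hkw
    rcases hq.dvd_mul.mp this with h | h
    · exact hqr h
    · exact hqz h
  have h1 : q ∣ 1 + d * (r * 1) := key 1 (fun h => hq.not_unit (isUnit_of_dvd_one h))
  have hX : ¬ q ∣ (X : P2) := fun h => hq1 (eq_of_prime_dvd_irreducible hq irreducible_X h)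
  have h2 : q ∣ 1 + d * (r * X) := key X hX
  have hsum : (1 + d * (r * 1)) + (1 + d * (r * X)) = d * r * (X + 1) := by
    have h20 : (1 : P2) + 1 = 0 := two_eq_zero
    ring_nf
    linear_combination h20
  have : q ∣ d * r * (X + 1) := hsum ▸ dvd_add h1 h2
  rcases hq.dvd_mul.mp this with h | h
  · rcases hq.dvd_mul.mp h with h' | h'
    · exact hqd h'
    · exact hqr h'
  · exact hq2 (eq_of_prime_dvd_irreducible hq X_add_one_irred h)


variable (f : P2)

lemma mem_span_mk {g : P2} (hgf : g ∣ f) (v : P2) :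
    Ideal.Quotient.mk (Ideal.span {f}) v ∈
      Ideal.span {Ideal.Quotient.mk (Ideal.span {f}) g} ↔ g ∣ v := by
  have hmap : Ideal.span ({Ideal.Quotient.mk (Ideal.span {f}) g} :
      Set (P2 ⧸ Ideal.span {f})) =
      Ideal.map (Ideal.Quotient.mk (Ideal.span {f})) (Ideal.span {g}) := by
    rw [Ideal.map_span, Set.image_singleton]
  have hcomap : Ideal.comap (Ideal.Quotient.mk (Ideal.span {f}))
      (Ideal.map (Ideal.Quotient.mk (Ideal.span {f})) (Ideal.span {g})) = Ideal.span {g} := by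
    rw [Ideal.comap_map_of_surjective _ Ideal.Quotient.mk_surjective, ← RingHom.ker_eq_comap_bot,
      Ideal.mk_ker]
    exact sup_eq_left.mpr (Ideal.span_singleton_le_span_singleton.mpr hgf)
  constructor
  · intro hv
    rw [hmap] at hv
    have : v ∈ Ideal.comap (Ideal.Quotient.mk (Ideal.span {f}))
        (Ideal.map (Ideal.Quotient.mk (Ideal.span {f})) (Ideal.span {g})) := hv
    rw [hcomap, Ideal.mem_span_singleton] at this
    exact this
  · intro hv
    exact Ideal.mem_span_singleton.mpr (map_dvd _ hv)

lemma isUnit_mk_of_coprime {v : P2} (h : IsCoprime v f) :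
    IsUnit (Ideal.Quotient.mk (Ideal.span {f}) v) := by
  obtain ⟨a, b, hab⟩ := h
  apply IsUnit.of_mul_eq_one (Ideal.Quotient.mk (Ideal.span {f}) a)
  have hf : Ideal.Quotient.mk (Ideal.span {f}) f = 0 :=
    Ideal.Quotient.eq_zero_iff_mem.mpr (Ideal.mem_span_singleton_self f)
  calc Ideal.Quotient.mk (Ideal.span {f}) v * Ideal.Quotient.mk (Ideal.span {f}) a
      = Ideal.Quotient.mk (Ideal.span {f}) (a * v + b * f) - Ideal.Quotient.mk (Ideal.span {f}) b
        * Ideal.Quotient.mk (Ideal.span {f}) f := by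
        rw [map_add, map_mul, map_mul]; ring
    _ = 1 := by rw [hab, hf, map_one, mul_zero, sub_zero]


open scoped Classical in
lemma card_bound (f : P2) :
    (({X, X + 1} : Finset P2).filter (· ∣ f)).card ≤
      (if EuclideanDomain.gcd (X * (X + 1)) f = 1 then 0
       else if EuclideanDomain.gcd (X * (X + 1)) f = X ∨
                EuclideanDomain.gcd (X * (X + 1)) f = X + 1 then 1
       else 2) := by
  by_cases hX : (X : P2) ∣ f <;> by_cases hX1 : (X + 1 : P2) ∣ f
  · have hXG : (X : P2) ∣ EuclideanDomain.gcd (X * (X + 1)) f :=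
      EuclideanDomain.dvd_gcd (dvd_mul_right _ _) hX
    have hX1G : (X + 1 : P2) ∣ EuclideanDomain.gcd (X * (X + 1)) f :=
      EuclideanDomain.dvd_gcd (dvd_mul_left _ _) hX1
    have h1 : EuclideanDomain.gcd (X * (X + 1)) f ≠ 1 := by
      intro h
      exact Polynomial.not_isUnit_X (isUnit_of_dvd_one (h ▸ hXG))
    have h2 : ¬ (EuclideanDomain.gcd (X * (X + 1)) f = X ∨
        EuclideanDomain.gcd (X * (X + 1)) f = X + 1) := by
      rintro (h | h)
      · rw [h] at hX1G
        exact X_ne_X_add_one (eq_of_prime_dvd_irreducible X_add_one_irred.prime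
          irreducible_X hX1G).symm
      · rw [h] at hXG
        exact X_ne_X_add_one (eq_of_prime_dvd_irreducible irreducible_X.prime
          X_add_one_irred hXG)
    rw [if_neg h1, if_neg h2]
    refine le_trans (Finset.card_filter_le _ _) ?_
    rw [Finset.card_insert_of_notMem (by simp [X_ne_X_add_one]), Finset.card_singleton]
  · have hXG : (X : P2) ∣ EuclideanDomain.gcd (X * (X + 1)) f :=
      EuclideanDomain.dvd_gcd (dvd_mul_right _ _) hX
    have h1 : EuclideanDomain.gcd (X * (X + 1)) f ≠ 1 := by
      intro h
      exact Polynomial.not_isUnit_X (isUnit_of_dvd_one (h ▸ hXG))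
    rw [Finset.filter_insert, if_pos hX, Finset.filter_singleton, if_neg hX1]
    rw [if_neg h1]
    split_ifs <;> simp
  · have hX1G : (X + 1 : P2) ∣ EuclideanDomain.gcd (X * (X + 1)) f :=
      EuclideanDomain.dvd_gcd (dvd_mul_left _ _) hX1
    have h1 : EuclideanDomain.gcd (X * (X + 1)) f ≠ 1 := by
      intro h
      have := isUnit_of_dvd_one (h ▸ hX1G)
      exact X_add_one_irred.not_isUnit this
    rw [Finset.filter_insert, if_neg hX, Finset.filter_singleton, if_pos hX1]
    rw [if_neg h1]
    split_ifs <;> simp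
  · rw [Finset.filter_insert, if_neg hX, Finset.filter_singleton, if_neg hX1]
    simp

open scoped Classical in
lemma count_lemma (f : P2) (hf0 : f ≠ 0) (n : ℕ) (c : ℕ → P2 ⧸ Ideal.span {f})
    (hcd : ∀ a b : ℕ, a ≤ b → c a ∣ c b)
    (hstrict' : ∀ i < n, ¬ c (i + 1) ∣ c i) :
    ((Finset.range n).filter (fun i =>
      {u : (P2 ⧸ Ideal.span {f})ˣ | ↑u * c i = c i} =
      {u : (P2 ⧸ Ideal.span {f})ˣ | ↑u * c (i + 1) = c (i + 1)})).card ≤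
      (if EuclideanDomain.gcd (X * (X + 1)) f = 1 then 0
       else if EuclideanDomain.gcd (X * (X + 1)) f = X ∨
                EuclideanDomain.gcd (X * (X + 1)) f = X + 1 then 1
       else 2) := by
  set π := Ideal.Quotient.mk (Ideal.span {f}) with hπdef
  set J : ℕ → Ideal P2 := fun i => Ideal.comap π (Ideal.span {c i}) with hJdef
  set g : ℕ → P2 := fun i => Submodule.IsPrincipal.generator (J i) with hgdef
  have hgJ : ∀ i, Ideal.span {g i} = J i := fun i =>
    Submodule.IsPrincipal.span_singleton_generator (J i)
  have hfJ : ∀ i, f ∈ J i := by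
    intro i
    have h0 : π f = 0 := Ideal.Quotient.eq_zero_iff_mem.mpr (Ideal.mem_span_singleton_self f)
    show π f ∈ Ideal.span {c i}
    rw [h0]; exact zero_mem _
  have hgf : ∀ i, g i ∣ f := by
    intro i
    rw [← Ideal.mem_span_singleton (y := g i), hgJ i]
    exact hfJ i
  have hg0 : ∀ i, g i ≠ 0 := by
    intro i h
    exact hf0 (zero_dvd_iff.mp (h ▸ hgf i))
  have hgmono : ∀ a b : ℕ, a ≤ b → g a ∣ g b := by
    intro a b hab
    have hJm : J b ≤ J a :=
      Ideal.comap_mono (Ideal.span_singleton_le_span_singleton.mpr (hcd a b hab))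
    have hmem : g b ∈ J a := hJm (by rw [← hgJ b]; exact Ideal.mem_span_singleton_self _)
    rw [← hgJ a, Ideal.mem_span_singleton] at hmem
    exact hmem
  have hspan : ∀ i, Ideal.span {c i} = Ideal.span {π (g i)} := by
    intro i
    conv_lhs => rw [← Ideal.map_comap_of_surjective π Ideal.Quotient.mk_surjective
      (Ideal.span {c i})]
    rw [show Ideal.comap π (Ideal.span {c i}) = J i from rfl, ← hgJ i, Ideal.map_span,
      Set.image_singleton]
  have hstrict : ∀ i < n, ¬ g (i + 1) ∣ g i := by
    intro i hi hdvd
    apply hstrict' i hi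
    have h1 : π (g i) ∣ c i := by
      rw [← Ideal.mem_span_singleton, ← hspan i]
      exact Ideal.mem_span_singleton_self _
    have h2 : c (i + 1) ∣ π (g (i + 1)) := by
      rw [← Ideal.mem_span_singleton, hspan (i + 1)]
      exact Ideal.mem_span_singleton_self _
    exact h2.trans ((map_dvd π hdvd).trans h1)
  -- the cofactors
  have hh0' : ∀ i, ∃ hi : P2, f = g i * hi := fun i => hgf i
  set h : ℕ → P2 := fun i => (hh0' i).choose with hhdef
  have hh : ∀ i, f = g i * h i := fun i => (hh0' i).choose_spec
  have hh0 : ∀ i, h i ≠ 0 := by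
    intro i hzero
    apply hf0; rw [hh i, hzero, mul_zero]
  have hhf : ∀ i, h i ∣ f := fun i => ⟨g i, by rw [hh i, mul_comm]⟩
  have hanti : ∀ a b : ℕ, a ≤ b → h b ∣ h a := by
    intro a b hab
    obtain ⟨t, ht⟩ := hgmono a b hab
    refine ⟨t, mul_left_cancel₀ (hg0 a) ?_⟩
    calc g a * h a = f := (hh a).symm
      _ = g b * h b := hh b
      _ = g a * (h b * t) := by rw [ht]; ring
  -- stabilizer translation
  have hstab : ∀ (i : ℕ) (u : (P2 ⧸ Ideal.span {f})ˣ) (w : P2),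
      π w = (u : P2 ⧸ Ideal.span {f}) - 1 →
      ((u : P2 ⧸ Ideal.span {f}) * c i = c i ↔ h i ∣ w) := by
    intro i u w hw
    have step1 : ((u : P2 ⧸ Ideal.span {f}) * c i = c i) ↔
        ((u : P2 ⧸ Ideal.span {f}) - 1) * c i = 0 := by
      rw [sub_mul, one_mul, sub_eq_zero]
    have step2 : (((u : P2 ⧸ Ideal.span {f}) - 1) * c i = 0) ↔ π w * π (g i) = 0 := by
      rw [← hw]
      constructor
      · intro h0
        have hg_mem : π (g i) ∈ Ideal.span {c i} := by
          rw [hspan i]; exact Ideal.mem_span_singleton_self _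
        obtain ⟨t, ht⟩ := Ideal.mem_span_singleton.mp hg_mem
        rw [ht, ← mul_assoc, h0, zero_mul]
      · intro h0
        have hc_mem : c i ∈ Ideal.span {π (g i)} := by
          rw [← hspan i]; exact Ideal.mem_span_singleton_self _
        obtain ⟨t, ht⟩ := Ideal.mem_span_singleton.mp hc_mem
        rw [ht, ← mul_assoc, h0, zero_mul]
    have step3 : (π w * π (g i) = 0) ↔ h i ∣ w := by
      rw [← map_mul, Ideal.Quotient.eq_zero_iff_mem, Ideal.mem_span_singleton]
      constructor
      · intro hdvd
        have hdvd' : g i * h i ∣ g i * w := by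
          rw [← hh i]; rw [mul_comm w (g i)] at hdvd; exact hdvd
        exact (mul_dvd_mul_iff_left (hg0 i)).mp hdvd'
      · intro hdvd
        rw [hh i, mul_comm w (g i)]
        exact mul_dvd_mul_left (g i) hdvd
    exact step1.trans (step2.trans step3)
  -- stall implies a linear prime marker
  have hstallq : ∀ i < n,
      {u : (P2 ⧸ Ideal.span {f})ˣ | ↑u * c i = c i} =
        {u : (P2 ⧸ Ideal.span {f})ˣ | ↑u * c (i + 1) = c (i + 1)} →
      ∃ q : P2, (q = X ∨ q = X + 1) ∧ q ∣ h i ∧ ¬ q ∣ h (i + 1) := by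
    intro i hi hS
    obtain ⟨k, hk⟩ := hgmono i (i + 1) (Nat.le_succ i)
    have hki : h i = k * h (i + 1) := by
      apply mul_left_cancel₀ (hg0 i)
      calc g i * h i = f := (hh i).symm
        _ = g (i + 1) * h (i + 1) := hh (i + 1)
        _ = g i * (k * h (i + 1)) := by rw [hk]; ring
    have hkunit : ¬ IsUnit k := by
      intro hu
      apply hstrict i hi
      obtain ⟨v, hv⟩ := hu.exists_right_inv
      exact ⟨v, by rw [hk, mul_assoc, hv, mul_one]⟩
    have hdkf : h (i + 1) * k ∣ f := by
      rw [mul_comm, ← hki]; exact hhf i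
    have hst : ∀ w : P2, IsCoprime (1 + h (i + 1) * w) f → k ∣ w := by
      intro w hcop
      have hu := isUnit_mk_of_coprime f hcop
      have hw : π (h (i + 1) * w) = ((hu.unit : (P2 ⧸ Ideal.span {f})ˣ) :
          P2 ⧸ Ideal.span {f}) - 1 := by
        rw [hu.unit_spec, map_add, map_one]; ring
      have humem : ((hu.unit : (P2 ⧸ Ideal.span {f})ˣ) : P2 ⧸ Ideal.span {f}) * c (i + 1)
          = c (i + 1) := (hstab (i + 1) hu.unit _ hw).mpr (dvd_mul_right _ _)
      have humem' : ((hu.unit : (P2 ⧸ Ideal.span {f})ˣ) : P2 ⧸ Ideal.span {f}) * c i = c i :=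
        (Set.ext_iff.mp hS hu.unit).mpr humem
      have hdvd : h i ∣ h (i + 1) * w := (hstab i hu.unit _ hw).mp humem'
      rw [hki, mul_comm k (h (i + 1))] at hdvd
      exact (mul_dvd_mul_iff_left (hh0 (i + 1))).mp hdvd
    obtain ⟨q, hq1, hq2, hq3⟩ := core hf0 hdkf hkunit hst
    exact ⟨q, hq1, hq2.trans ⟨h (i + 1), hki⟩, hq3⟩
  -- counting
  have hsel : ∀ i : ℕ, ∃ q : P2,
      (i < n ∧ ({u : (P2 ⧸ Ideal.span {f})ˣ | ↑u * c i = c i} =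
        {u : (P2 ⧸ Ideal.span {f})ˣ | ↑u * c (i + 1) = c (i + 1)})) →
      ((q = X ∨ q = X + 1) ∧ q ∣ h i ∧ ¬ q ∣ h (i + 1)) := by
    intro i
    by_cases hcase : i < n ∧ ({u : (P2 ⧸ Ideal.span {f})ˣ | ↑u * c i = c i} =
        {u : (P2 ⧸ Ideal.span {f})ˣ | ↑u * c (i + 1) = c (i + 1)})
    · obtain ⟨q, hq⟩ := hstallq i hcase.1 hcase.2
      exact ⟨q, fun _ => hq⟩
    · exact ⟨X, fun hcc => absurd hcc hcase⟩
  refine le_trans (Finset.card_le_card_of_injOn (fun i => (hsel i).choose) ?_ ?_)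
    (card_bound f)
  · intro i hiT
    rw [Finset.mem_coe, Finset.mem_filter, Finset.mem_range] at hiT
    obtain ⟨hq1, hq2, hq3⟩ := (hsel i).choose_spec hiT
    rw [Finset.mem_coe, Finset.mem_filter]
    constructor
    · rw [Finset.mem_insert, Finset.mem_singleton]; exact hq1
    · exact hq2.trans (hhf i)
  · have key : ∀ a b : ℕ,
        (a ∈ (Finset.range n).filter (fun i =>
          {u : (P2 ⧸ Ideal.span {f})ˣ | ↑u * c i = c i} =
          {u : (P2 ⧸ Ideal.span {f})ˣ | ↑u * c (i + 1) = c (i + 1)})) →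
        (b ∈ (Finset.range n).filter (fun i =>
          {u : (P2 ⧸ Ideal.span {f})ˣ | ↑u * c i = c i} =
          {u : (P2 ⧸ Ideal.span {f})ˣ | ↑u * c (i + 1) = c (i + 1)})) →
        a < b → (hsel a).choose ≠ (hsel b).choose := by
      intro a b ha hb hab heq
      rw [Finset.mem_filter, Finset.mem_range] at ha hb
      obtain ⟨-, -, ha3⟩ := (hsel a).choose_spec ha
      obtain ⟨-, hb2, -⟩ := (hsel b).choose_spec hb
      exact ha3 (heq ▸ (hb2.trans (hanti (a + 1) b hab)))
    intro a ha b hb heq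
    rw [Finset.mem_coe] at ha hb
    rcases lt_trichotomy a b with h' | h' | h'
    · exact absurd heq (key a b ha hb h')
    · exact h'
    · exact absurd heq.symm (key b a hb ha h')

end Stmt13Aux

open scoped Classical in
theorem stmt13 (f : (ZMod 2)[X]) (hf : 0 < f.degree)
    (l : List ((ZMod 2)[X] ⧸ Ideal.span {f}))
    (hchain : ∀ i < l.length,
      ((l.take (i + 1)).prod = (l.take i).prod ∨
        ∃ c, (l.take (i + 1)).prod = (l.take i).prod * c) ∧
      ¬ ((l.take i).prod = (l.take (i + 1)).prod ∨
        ∃ c, (l.take i).prod = (l.take (i + 1)).prod * c)) :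
    (∀ i < l.length,
      {u : ((ZMod 2)[X] ⧸ Ideal.span {f})ˣ |
          (u : (ZMod 2)[X] ⧸ Ideal.span {f}) * (l.take i).prod = (l.take i).prod} ⊆
        {u : ((ZMod 2)[X] ⧸ Ideal.span {f})ˣ |
          (u : (ZMod 2)[X] ⧸ Ideal.span {f}) * (l.take (i + 1)).prod = (l.take (i + 1)).prod}) ∧
    ((Finset.range l.length).filter (fun i =>
        {u : ((ZMod 2)[X] ⧸ Ideal.span {f})ˣ |
            (u : (ZMod 2)[X] ⧸ Ideal.span {f}) * (l.take i).prod = (l.take i).prod} =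
          {u : ((ZMod 2)[X] ⧸ Ideal.span {f})ˣ |
            (u : (ZMod 2)[X] ⧸ Ideal.span {f}) * (l.take (i + 1)).prod =
              (l.take (i + 1)).prod})).card ≤
      (if EuclideanDomain.gcd (X * (X + 1)) f = 1 then 0
       else if EuclideanDomain.gcd (X * (X + 1)) f = X ∨
                EuclideanDomain.gcd (X * (X + 1)) f = X + 1 then 1
       else 2) := by
  have hf0 : f ≠ 0 := by
    intro h; rw [h] at hf; simp at hf
  constructor
  · intro i hi u hu
    simp only [Set.mem_setOf_eq] at hu ⊢
    rw [List.prod_take_succ l i hi, ← mul_assoc, hu]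
  · have hcd : ∀ a b : ℕ, a ≤ b → (l.take a).prod ∣ (l.take b).prod := by
      intro a b hab
      refine ⟨((l.take b).drop a).prod, ?_⟩
      conv_lhs => rw [← List.take_append_drop a (l.take b)]
      rw [List.prod_append, List.take_take, min_eq_left hab]
    have hstrict' : ∀ i < l.length, ¬ (l.take (i + 1)).prod ∣ (l.take i).prod := by
      intro i hi hdvd
      obtain ⟨t, ht⟩ := hdvd
      exact (hchain i hi).2 (Or.inr ⟨t, ht⟩)
    exact Stmt13Aux.count_lemma f hf0 l.length (fun i => (l.take i).prod) hcd hstrict'
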